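/- Applying the amplitude damping channel m₁ times locally on both qubits of the Bell state Φ+ = |Φ+⟩⟨Φ+| yields the state (1/4)[I⊗I + a(X⊗X − Y⊗Y) + (1−a)(I⊗Z + Z⊗I) + ((1−a)² + a²) Z⊗Z], where a = (1-γ)^{m₁}. -/
import Mathlib


open Matrix Kronecker BigOperators

noncomputable section

def pI : Matrix (Fin 2) (Fin 2) ℂ := 1
def pX : Matrix (Fin 2) (Fin 2) ℂ := !![0, 1; 1, 0]
def pY : Matrix (Fin 2) (Fin 2) ℂ := !![0, -Complex.I; Complex.I, 0]
def pZ : Matrix (Fin 2) (Fin 2) ℂ := !![1, 0; 0, -1]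

def K0 (γ : ℝ) : Matrix (Fin 2) (Fin 2) ℂ := !![1, 0; 0, (Real.sqrt (1 - γ) : ℂ)]
def K1 (γ : ℝ) : Matrix (Fin 2) (Fin 2) ℂ := !![0, (Real.sqrt γ : ℂ); 0, 0]

/-- The amplitude damping channel on one qubit. -/
def AD (γ : ℝ) (ρ : Matrix (Fin 2) (Fin 2) ℂ) : Matrix (Fin 2) (Fin 2) ℂ :=
  K0 γ * ρ * (K0 γ)ᴴ + K1 γ * ρ * (K1 γ)ᴴ

abbrev Q2 := Fin 2 × Fin 2

/-- The Bell state |Φ⁺⟩ = (|00⟩+|11⟩)/√2. -/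
def φplus : Q2 → ℂ := fun p => if p.1 = p.2 then ((Real.sqrt 2 : ℂ))⁻¹ else 0

/-- |Φxz⟩ = (I ⊗ XˣZᶻ)|Φ⁺⟩. -/
def bell (x z : Fin 2) : Q2 → ℂ :=
  ((1 : Matrix (Fin 2) (Fin 2) ℂ) ⊗ₖ (pX ^ (x : ℕ) * pZ ^ (z : ℕ))).mulVec φplus

/-- |v⟩⟨w|. -/
def outer (v w : Q2 → ℂ) : Matrix Q2 Q2 ℂ := vecMulVec v (star w)

/-- |v⟩⟨v|. -/
def proj (v : Q2 → ℂ) : Matrix Q2 Q2 ℂ := outer v v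

/-- The amplitude damping channel acting locally on both qubits. -/
def AD2 (γ : ℝ) (ρ : Matrix Q2 Q2 ℂ) : Matrix Q2 Q2 ℂ :=
  (K0 γ ⊗ₖ K0 γ) * ρ * (K0 γ ⊗ₖ K0 γ)ᴴ + (K0 γ ⊗ₖ K1 γ) * ρ * (K0 γ ⊗ₖ K1 γ)ᴴ +
  (K1 γ ⊗ₖ K0 γ) * ρ * (K1 γ ⊗ₖ K0 γ)ᴴ + (K1 γ ⊗ₖ K1 γ) * ρ * (K1 γ ⊗ₖ K1 γ)ᴴ

/-- Three-parameter link state. -/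
def σ3 (c1 c2 c3 : ℝ) : Matrix Q2 Q2 ℂ :=
  (c1 : ℂ) • proj (bell 0 0) + (c2 : ℂ) • proj (bell 0 1) +
  (c3 : ℂ) • (outer (bell 0 0) (bell 0 1) + outer (bell 0 1) (bell 0 0)) +
  (((1 - c1 - c2) / 2 : ℝ) : ℂ) • (proj (bell 1 0) + proj (bell 1 1))

/-- Four-parameter AQN link state. -/
def σ4 (h1 h2 h3 h4 : ℝ) : Matrix Q2 Q2 ℂ :=
  σ3 h1 h2 h3 + (h4 : ℂ) • (outer (bell 1 0) (bell 1 1) + outer (bell 1 1) (bell 1 0))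

abbrev Q4 := Q2 × Q2

/-- ⟨Φxz|_{Q₁Q₂} ⊗ XˣZᶻ_R as a matrix from the four-qubit space P Q₁ Q₂ R to P R. -/
def braB (x z : Fin 2) : Matrix Q2 Q4 ℂ :=
  Matrix.of fun pr q =>
    (if pr.1 = q.1.1 then (1 : ℂ) else 0) *
      (starRingEnd ℂ) (bell x z (q.1.2, q.2.1)) * (pX ^ (x : ℕ) * pZ ^ (z : ℕ)) pr.2 q.2.2

/-- The entanglement swapping map. -/
def swapMap (ρ : Matrix Q4 Q4 ℂ) : Matrix Q2 Q2 ℂ :=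
  ∑ x : Fin 2, ∑ z : Fin 2, braB x z * ρ * (braB x z)ᴴ


def mform (a : ℝ) : Matrix Q2 Q2 ℂ :=
  (1 / 4 : ℂ) • (pI ⊗ₖ pI + ((a : ℝ) : ℂ) • (pX ⊗ₖ pX - pY ⊗ₖ pY) +
    ((1 - a : ℝ) : ℂ) • (pI ⊗ₖ pZ + pZ ⊗ₖ pI) +
    (((1 - a) ^ 2 + a ^ 2 : ℝ) : ℂ) • (pZ ⊗ₖ pZ))

lemma mform_base : proj (bell 0 0) = mform 1 := by
  ext ⟨i, j⟩ ⟨k, l⟩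
  fin_cases i <;> fin_cases j <;> fin_cases k <;> fin_cases l
  all_goals
    simp [proj, outer, bell, φplus, mform, pI, pX, pY, pZ, Matrix.vecMulVec_apply,
        Matrix.one_kronecker_one, Matrix.mulVec, dotProduct, Fin.sum_univ_succ,
        Matrix.kroneckerMap_apply, Matrix.one_apply, Matrix.smul_apply, Matrix.add_apply,
        Matrix.sub_apply, Complex.conj_ofReal, Complex.ext_iff, Prod.ext_iff]
  all_goals try ring_nf
  all_goals try norm_num [Real.sq_sqrt, Prod.ext_iff]

lemma kron_conjT (A B : Matrix (Fin 2) (Fin 2) ℂ) : (A ⊗ₖ B)ᴴ = Aᴴ ⊗ₖ Bᴴ := by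
  ext ⟨i, j⟩ ⟨k, l⟩
  simp [Matrix.conjTranspose_apply, Matrix.kroneckerMap_apply, mul_comm]

lemma AD2_kron (γ : ℝ) (A B : Matrix (Fin 2) (Fin 2) ℂ) :
    AD2 γ (A ⊗ₖ B) = AD γ A ⊗ₖ AD γ B := by
  simp only [AD2, AD, kron_conjT, Matrix.mul_kronecker_mul, Matrix.add_kronecker,
    Matrix.kronecker_add]
  abel

lemma AD2_add (γ : ℝ) (A B : Matrix Q2 Q2 ℂ) : AD2 γ (A + B) = AD2 γ A + AD2 γ B := by
  simp only [AD2, Matrix.mul_add, Matrix.add_mul]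
  abel

lemma AD2_smul (γ : ℝ) (c : ℂ) (A : Matrix Q2 Q2 ℂ) : AD2 γ (c • A) = c • AD2 γ A := by
  simp only [AD2, Matrix.mul_smul, Matrix.smul_mul, smul_add]

lemma AD2_sub (γ : ℝ) (A B : Matrix Q2 Q2 ℂ) : AD2 γ (A - B) = AD2 γ A - AD2 γ B := by
  simp only [AD2, Matrix.mul_sub, Matrix.sub_mul]
  abel

lemma AD_I (γ : ℝ) (h0 : 0 ≤ γ) (h1 : γ ≤ 1) : AD γ pI = pI + (γ : ℂ) • pZ := by
  have hc : (Real.sqrt (1 - γ) : ℂ) * (Real.sqrt (1 - γ) : ℂ) = ((1 - γ : ℝ) : ℂ) := by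
    norm_cast
    exact Real.mul_self_sqrt (by linarith)
  have hs : (Real.sqrt γ : ℂ) * (Real.sqrt γ : ℂ) = (γ : ℂ) := by
    norm_cast
    exact Real.mul_self_sqrt h0
  ext i j
  fin_cases i <;> fin_cases j <;>
    · simp [AD, K0, K1, pI, pZ, Matrix.mul_apply, Fin.sum_univ_succ, Matrix.one_apply,
        Matrix.vecMul, dotProduct, Matrix.conjTranspose_apply, Complex.conj_ofReal]
      try rw [hc]
      try rw [hs]
      try push_cast
      try ring


set_option maxHeartbeats 1000000 in
lemma mform_step (γ a : ℝ) (h0 : 0 ≤ γ) (h1 : γ ≤ 1) :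
    AD2 γ (mform a) = mform ((1 - γ) * a) := by
  have hc2 : (Real.sqrt (1 - γ) : ℂ) ^ 2 = ((1 - γ : ℝ) : ℂ) := by
    norm_cast; exact Real.sq_sqrt (by linarith)
  have hs2 : (Real.sqrt γ : ℂ) ^ 2 = (γ : ℂ) := by
    norm_cast; exact Real.sq_sqrt h0
  have hc4 : (Real.sqrt (1 - γ) : ℂ) ^ 4 = ((1 - γ : ℝ) : ℂ) ^ 2 := by
    rw [show (4 : ℕ) = 2 * 2 from rfl, pow_mul, hc2]
  have hs4 : (Real.sqrt γ : ℂ) ^ 4 = (γ : ℂ) ^ 2 := by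
    rw [show (4 : ℕ) = 2 * 2 from rfl, pow_mul, hs2]
  simp only [mform, AD2_smul, AD2_add, AD2_sub, AD2_kron]
  ext ⟨i, j⟩ ⟨k, l⟩
  fin_cases i <;> fin_cases j <;> fin_cases k <;> fin_cases l
  all_goals
    simp [AD, K0, K1, pI, pX, pY, pZ, Matrix.mul_apply, Matrix.vecMul, dotProduct,
      Matrix.conjTranspose_apply, Fin.sum_univ_succ, Matrix.one_apply,
      Matrix.kroneckerMap_apply, Matrix.smul_apply, Matrix.add_apply, Matrix.sub_apply,
      Complex.conj_ofReal]
  all_goals try ring_nf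
  all_goals try simp only [hc2, hs2, hc4, hs4, Complex.I_sq]
  all_goals try push_cast
  all_goals try ring
  all_goals try norm_num [Prod.ext_iff]

/-- m₁-fold local amplitude damping on both qubits of Φ⁺, in the Pauli basis. -/
theorem adc_on_bell_pauli_form (γ : ℝ) (h0 : 0 ≤ γ) (h1 : γ ≤ 1) (m₁ : ℕ) :
    (AD2 γ)^[m₁] (proj (bell 0 0)) =
      (1 / 4 : ℂ) • (pI ⊗ₖ pI + (((1 - γ) ^ m₁ : ℝ) : ℂ) • (pX ⊗ₖ pX - pY ⊗ₖ pY) +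
        ((1 - (1 - γ) ^ m₁ : ℝ) : ℂ) • (pI ⊗ₖ pZ + pZ ⊗ₖ pI) +
        (((1 - (1 - γ) ^ m₁) ^ 2 + ((1 - γ) ^ m₁) ^ 2 : ℝ) : ℂ) • (pZ ⊗ₖ pZ)) := by
  induction m₁ with
  | zero => simpa [mform] using mform_base
  | succ n ih =>
      rw [Function.iterate_succ_apply', ih]
      have h := mform_step γ ((1 - γ) ^ n) h0 h1
      rw [show (1 - γ) * (1 - γ) ^ n = (1 - γ) ^ (n + 1) from (pow_succ' _ _).symm] at h
      simpa [mform] using h
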